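/- Constant-step noise floor: let (g_t) be a nonnegative sequence satisfying g_{t+1} ≤ g_t − a·η·g_t^{3/2} + b·σ·η·g_t^{1/2} + C·η² with a fixed step size η ∈ (0, η₀] and constants a, b, C > 0, σ ≥ 0. Then limsup_{t→∞} g_t ≤ K₁·(σ/a)·b + K₂·(C/a)^{2/3}·η^{2/3} for suitable constants K₁, K₂ depending only on a, b, C (in particular the steady-state error is O(σ) + O(η^{2/3}) in g, matching the paper's O(ση)+O(η²) claim after the substitution g ≈ y²). -/

import Mathlib

set_option maxHeartbeats 1000000

private lemma rpow_3_2' {x : ℝ} (hx : 0 ≤ x) : x ^ ((3:ℝ)/2) = x * Real.sqrt x := by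
  rcases hx.eq_or_lt with h | h
  · rw [← h, Real.zero_rpow (by norm_num), Real.sqrt_zero, mul_zero]
  · rw [show (3:ℝ)/2 = 1 + 1/2 by norm_num, Real.rpow_add h, Real.rpow_one,
      ← Real.sqrt_eq_rpow]

theorem constant_step_noise_floor (a b C : ℝ) (ha : 0 < a) (hb : 0 < b) (hC : 0 < C) :
    ∃ K₁ K₂ : ℝ, 0 < K₁ ∧ 0 < K₂ ∧
      ∀ (η η₀ σ : ℝ) (g : ℕ → ℝ),
        0 < η → η ≤ η₀ → 0 ≤ σ → (∀ t, 0 ≤ g t) →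
        (∀ t, g (t + 1) ≤
          g t - a * η * g t ^ ((3 : ℝ) / 2) + b * σ * η * g t ^ ((1 : ℝ) / 2)
            + C * η ^ 2) →
        Filter.limsup g Filter.atTop ≤
          K₁ * (σ / a) * b + K₂ * (C / a) ^ ((2 : ℝ) / 3) * η ^ ((2 : ℝ) / 3) := by
  refine ⟨10, 10, by norm_num, by norm_num, ?_⟩
  intro η η₀ σ g hη _hηη₀ hσ hg hrec
  -- basic quantities
  obtain ⟨s, hs_def⟩ : ∃ s : ℝ, s = b * σ / a := ⟨_, rfl⟩
  have hs : 0 ≤ s := by rw [hs_def]; positivity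
  have hbσ : b * σ = a * s := by rw [hs_def]; field_simp
  obtain ⟨u, hu_def⟩ : ∃ u : ℝ, u = (C / a * η) ^ ((2:ℝ)/3) := ⟨_, rfl⟩
  have hCa : 0 < C / a * η := by positivity
  have hu : 0 < u := hu_def ▸ Real.rpow_pos_of_pos hCa _
  obtain ⟨uv, huv_def⟩ : ∃ v : ℝ, v = Real.sqrt u := ⟨_, rfl⟩
  obtain ⟨sv, hsv_def⟩ : ∃ v : ℝ, v = Real.sqrt s := ⟨_, rfl⟩
  have huvp : 0 < uv := by rw [huv_def]; exact Real.sqrt_pos.2 hu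
  have hsvp : 0 ≤ sv := by rw [hsv_def]; exact Real.sqrt_nonneg s
  have huv2 : uv ^ 2 = u := by rw [huv_def]; exact Real.sq_sqrt hu.le
  have hsv2 : sv ^ 2 = s := by rw [hsv_def]; exact Real.sq_sqrt hs
  have hu32 : u * uv = C / a * η := by
    have h1 : u ^ ((3:ℝ)/2) = C / a * η := by
      rw [hu_def, ← Real.rpow_mul hCa.le, show (2/3:ℝ)*(3/2) = 1 by norm_num,
        Real.rpow_one]
    rw [← h1, rpow_3_2' hu.le, huv_def]
  have hη_eq : η = a * (u * uv) / C := by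
    rw [hu32]; field_simp
  have hCη : a * (u * uv) = C * η := by rw [hu32]; field_simp
  -- rewritten recursion
  have hrec' : ∀ t, g (t+1) ≤ g t - a*η*(g t * Real.sqrt (g t))
      + b*σ*η*Real.sqrt (g t) + C*η^2 := by
    intro t
    have h := hrec t
    rwa [rpow_3_2' (hg t), show g t ^ ((1:ℝ)/2) = Real.sqrt (g t) from
      (Real.sqrt_eq_rpow _).symm] at h
  obtain ⟨G, hG_def⟩ : ∃ G : ℝ, G = 4*s + 4*u := ⟨_, rfl⟩
  have hGpos : 0 < G := by rw [hG_def]; positivity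
  obtain ⟨δ, hδ_def⟩ : ∃ d : ℝ, d = a/2 * η * (G * Real.sqrt G) := ⟨_, rfl⟩
  have hδ : 0 < δ := by
    have h := Real.sqrt_pos.2 hGpos
    rw [hδ_def]; positivity
  -- descent above G
  have hdesc : ∀ t, G ≤ g t → g (t+1) ≤ g t - δ := by
    intro t hGt
    set x := g t with hx_def
    have hx : 0 ≤ x := hg t
    have hsx : 0 ≤ Real.sqrt x := Real.sqrt_nonneg x
    have h4s : 4*s ≤ x := by rw [hG_def] at hGt; linarith
    have h4u : 4*u ≤ x := by rw [hG_def] at hGt; linarith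
    have hsq4u : 2*uv ≤ Real.sqrt x := by
      have h1 : Real.sqrt (4*u) = 2*uv := by
        rw [show (4:ℝ)*u = 2^2*u by norm_num, Real.sqrt_mul (by positivity),
          Real.sqrt_sq (by norm_num), huv_def]
      rw [← h1]; exact Real.sqrt_le_sqrt h4u
    -- noise term
    have h1 : b*σ*Real.sqrt x ≤ a/4 * (x * Real.sqrt x) := by
      rw [hbσ]
      nlinarith [mul_nonneg (mul_nonneg (by linarith : (0:ℝ) ≤ a/4) hsx)
        (by linarith : 0 ≤ x - 4*s)]
    -- C term : C*η ≤ a/8 * (x * sqrt x)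
    have h2 : C*η ≤ a/8 * (x * Real.sqrt x) := by
      have hmul : (4*u) * (2*uv) ≤ x * Real.sqrt x :=
        mul_le_mul h4u hsq4u (by positivity) hx
      have hmul' := mul_le_mul_of_nonneg_left hmul (by positivity : (0:ℝ) ≤ a/8)
      linarith [hCη]
    -- δ term
    have h3 : δ ≤ a/2 * η * (x * Real.sqrt x) := by
      have hmul : G * Real.sqrt G ≤ x * Real.sqrt x :=
        mul_le_mul hGt (Real.sqrt_le_sqrt hGt) (Real.sqrt_nonneg G) hx
      rw [hδ_def]
      exact mul_le_mul_of_nonneg_left hmul (by positivity)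
    have h1' := mul_le_mul_of_nonneg_left h1 hη.le
    have h2' := mul_le_mul_of_nonneg_left h2 hη.le
    have hm : 0 ≤ a*η*(x*Real.sqrt x) := by positivity
    linarith [hrec' t, h1', h2', h3, hm]
  -- entry below G
  have hentry : ∃ t, g t < G := by
    by_contra hcon
    push_neg at hcon
    have hstep : ∀ t : ℕ, g t ≤ g 0 - t * δ := by
      intro t; induction t with
      | zero => simp
      | succ n ih =>
        have h := hdesc n (hcon n)
        push_cast
        push_cast at ih
        linarith
    obtain ⟨n, hn⟩ := exists_nat_gt (g 0 / δ)
    have h1 : g 0 / δ * δ < n * δ := mul_lt_mul_of_pos_right hn hδ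
    rw [div_mul_cancel₀ _ hδ.ne'] at h1
    have := hstep n
    have := hg n
    linarith
  -- bound on "consistent" states
  have hS : ∀ y : ℝ, 0 ≤ y → a*η*(y*Real.sqrt y) ≤ y + b*σ*η*Real.sqrt y + C*η^2 →
      y ≤ 9/(a^2*η^2) + 3*s + 3*u := by
    intro y hy hle
    by_contra hcon
    push_neg at hcon
    set w := Real.sqrt y with hw_def
    have hw2 : w^2 = y := Real.sq_sqrt hy
    have hwnn : 0 ≤ w := Real.sqrt_nonneg y
    have h9pos : (0:ℝ) < 9/(a^2*η^2) := by positivity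
    have hy9 : 9/(a^2*η^2) < y := by nlinarith [hu.le]
    have hy3s : 3*s < y := by nlinarith [hu.le]
    have hy3u : 3*u < y := by nlinarith
    have hypos : 0 < y := by nlinarith
    -- w > 3/(a η)
    have hww : 3/(a*η) < w := by
      have h1 : (3/(a*η))^2 < w^2 := by
        rw [hw2]
        calc (3/(a*η))^2 = 9/(a^2*η^2) := by field_simp; ring
          _ < y := hy9
      exact lt_of_pow_lt_pow_left₀ 2 hwnn h1
    have f1 : y < a*η/3 * (y*w) := by
      have h := mul_lt_mul_of_pos_left hww (show 0 < a*η/3*y by positivity)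
      have heq : a*η/3*y*(3/(a*η)) = y := by field_simp
      rw [heq] at h
      linarith [h, (by ring : a*η/3*y*w = a*η/3*(y*w))]
    have f2 : b*σ*η*w ≤ a*η/3 * (y*w) := by
      rw [hbσ]
      nlinarith [mul_nonneg (mul_nonneg (by positivity : (0:ℝ) ≤ a*η/3) hwnn)
        (by linarith : 0 ≤ y - 3*s)]
    have f3 : C*η^2 < a*η/3 * (y*w) := by
      have hwuv : uv ≤ w := by
        rw [huv_def, hw_def]
        exact Real.sqrt_le_sqrt (by linarith)
      have hmul : 3*(u*uv) < y*w := by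
        nlinarith [mul_pos (by linarith : 0 < y - 3*u) huvp,
          mul_nonneg (by linarith : 0 ≤ w - uv) hy]
      have hmul' := mul_lt_mul_of_pos_left hmul (by positivity : (0:ℝ) < a*η/3)
      nlinarith [hCη, hmul']
    nlinarith [hle]
  -- invariance of [0, T]
  obtain ⟨T, hT_def⟩ : ∃ T : ℝ, T = 10*s + 10*u := ⟨_, rfl⟩
  have hstepT : ∀ t, g t ≤ T → g (t+1) ≤ T := by
    intro t hgt
    rcases le_or_gt G (g t) with hGle | hGlt
    · have h := hdesc t hGle
      linarith [hδ]
    · -- g t < G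
      have hA : g (t+1) ≤ G + b*σ*η*Real.sqrt G + C*η^2 := by
        have h := hrec' t
        have hdrift : 0 ≤ a*η*(g t * Real.sqrt (g t)) := by
          have h1 := hg t; have h2 := Real.sqrt_nonneg (g t); positivity
        have hsqle : Real.sqrt (g t) ≤ Real.sqrt G := Real.sqrt_le_sqrt hGlt.le
        have hnoise : b*σ*η*Real.sqrt (g t) ≤ b*σ*η*Real.sqrt G :=
          mul_le_mul_of_nonneg_left hsqle (by positivity)
        linarith
      have hR : g (t+1) ≤ 9/(a^2*η^2) + 3*s + 3*u := by
        apply hS _ (hg (t+1))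
        have h := hrec' (t+1)
        have := hg (t+2)
        linarith
      by_cases hc : 2*a^2*u^2 ≤ 3*C ∧ 4*a^4*(u^3*s) ≤ 9*C^2
      · -- route A
        obtain ⟨hc1, hc2⟩ := hc
        have hsG : Real.sqrt G ≤ 2*sv + 2*uv := by
          have h1 : G ≤ (2*sv+2*uv)^2 := by
            rw [hG_def]; nlinarith [mul_nonneg hsvp huvp.le, hsv2, huv2]
          calc Real.sqrt G ≤ Real.sqrt ((2*sv+2*uv)^2) := Real.sqrt_le_sqrt h1
            _ = 2*sv+2*uv := Real.sqrt_sq (by positivity)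
        have hGnn := hGpos.le
        have hterm1 : C*η^2 ≤ 3*u := by
          have heq : C*η^2 = a^2*(u^2*uv^2)/C := by rw [hη_eq]; field_simp
          rw [heq, huv2, div_le_iff₀ hC]
          linarith [mul_le_mul_of_nonneg_right hc1 hu.le, mul_nonneg hC.le hu.le]
        have hterm2 : b*σ*η*(2*uv) ≤ 3*s := by
          have heq : b*σ*η*(2*uv) = 2*a^2*s*(u*uv^2)/C := by
            rw [hbσ, hη_eq]; field_simp
          rw [heq, huv2, div_le_iff₀ hC]
          linarith [mul_le_mul_of_nonneg_right hc1 hs]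
        have hterm3 : b*σ*η*(2*sv) ≤ 3*s := by
          have heq : b*σ*η*(2*sv) = 2*a^2*(s*(u*uv*sv))/C := by
            rw [hbσ, hη_eq]; field_simp
          rw [heq, div_le_iff₀ hC]
          have hkey : 2*a^2*(u*uv*sv) ≤ 3*C := by
            have hsq : (2*a^2*(u*uv*sv))^2 ≤ (3*C)^2 := by
              have hh : (2*a^2*(u*uv*sv))^2 = 4*a^4*((u^2*(uv^2))*sv^2) := by ring
              rw [hh, huv2, hsv2]; linarith [hc2]
            exact (pow_le_pow_iff_left₀ (by positivity) (by positivity) two_ne_zero).1 hsq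
          linarith [mul_le_mul_of_nonneg_right hkey hs]
        have hnoiseG : b*σ*η*Real.sqrt G ≤ 3*s + 3*s := by
          have hbp : (0:ℝ) ≤ b*σ*η := by positivity
          have hmm := mul_le_mul_of_nonneg_left hsG hbp
          linarith [hterm2, hterm3]
        rw [hT_def]
        linarith [hA, hnoiseG, hterm1, hG_def.le, hG_def.ge, hu.le]
      · -- route B
        have h9 : 9/(a^2*η^2) ≤ 7*s + 7*u := by
          have hη2 : a^2*η^2 = a^4*(u^2*(uv^2))/C^2 := by rw [hη_eq]; field_simp
          rw [huv2] at hη2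
          have heq : 9/(a^2*η^2) = 9*C^2/(a^4*(u^2*u)) := by
            rw [hη2, div_div_eq_mul_div]
          rw [heq, div_le_iff₀ (by positivity : (0:ℝ) < a^4*(u^2*u))]
          rcases not_and_or.mp hc with h | h
          · rw [not_le] at h
            have h3 : (3*C)^2 < (2*a^2*u^2)^2 :=
              pow_lt_pow_left₀ h (by positivity) (by norm_num)
            linarith [mul_nonneg hs (by positivity : (0:ℝ) ≤ a^4*(u^2*u)), sq_nonneg C]
          · rw [not_le] at h
            linarith [mul_nonneg hu.le (by positivity : (0:ℝ) ≤ a^4*(u^2*u)), sq_nonneg C]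
        rw [hT_def]
        linarith
  -- conclude
  obtain ⟨t₀, ht₀⟩ := hentry
  have hGT : G ≤ T := by rw [hG_def, hT_def]; linarith
  have hbound : ∀ t, t₀ ≤ t → g t ≤ T := by
    intro t ht
    induction t, ht using Nat.le_induction with
    | base => linarith
    | succ n _ ih => exact hstepT n ih
  have hev : ∀ᶠ t in Filter.atTop, g t ≤ T := Filter.eventually_atTop.2 ⟨t₀, hbound⟩
  have hls : Filter.limsup g Filter.atTop ≤ T :=
    Filter.limsup_le_of_le (Filter.isCoboundedUnder_le_of_le _ hg) hev
  have htarget : (10:ℝ) * (σ / a) * b + 10 * (C/a) ^ ((2:ℝ)/3) * η ^ ((2:ℝ)/3) = T := by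
    rw [hT_def, hs_def, hu_def, Real.mul_rpow (by positivity : (0:ℝ) ≤ C/a) hη.le]
    ring
  rw [htarget]
  exact hls
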